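/- Let φ(x,y) = sin x · sin y and v(x,y) = sin²x·(1 − cos y). Then for all (x,y) ∈ (0,π) × (0,π), −(1/2)·(∂²v/∂x² + ∂²v/∂y²) + (1/(2·φ(x,y)))·((∂φ/∂x)·(∂v/∂x) + (∂φ/∂y)·(∂v/∂y)) = v(x,y). -/

import Mathlib

open Real Set

lemma dv1 (c x : ℝ) : deriv (fun x' => Real.sin x' ^ 2 * c) x
    = 2 * Real.sin x * Real.cos x * c := by
  have h := ((Real.hasDerivAt_sin x).pow 2).mul_const c
  simpa using h.deriv

lemma dv1' (c x : ℝ) : deriv (deriv (fun x' => Real.sin x' ^ 2 * c)) x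
    = 2 * (Real.cos x ^ 2 - Real.sin x ^ 2) * c := by
  have hf : deriv (fun x' => Real.sin x' ^ 2 * c)
      = fun x' => 2 * Real.sin x' * Real.cos x' * c := funext fun x' => dv1 c x'
  rw [hf]
  have h : HasDerivAt (fun x' => 2 * Real.sin x' * Real.cos x' * c)
      (2 * (Real.cos x ^ 2 - Real.sin x ^ 2) * c) x := by
    have := (((Real.hasDerivAt_sin x).const_mul 2).mul (Real.hasDerivAt_cos x)).mul_const c
    exact this.congr_deriv (by ring)
  exact h.deriv

lemma dv2 (c y : ℝ) : deriv (fun y' => c * (1 - Real.cos y')) y = c * Real.sin y := by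
  have h := ((hasDerivAt_const y (1:ℝ)).sub (Real.hasDerivAt_cos y)).const_mul c
  simpa using h.deriv

lemma dv2' (c y : ℝ) : deriv (deriv (fun y' => c * (1 - Real.cos y'))) y
    = c * Real.cos y := by
  have hf : deriv (fun y' => c * (1 - Real.cos y')) = fun y' => c * Real.sin y' :=
    funext fun y' => dv2 c y'
  rw [hf]
  simpa using ((Real.hasDerivAt_sin y).const_mul c).deriv

lemma dphi1 (c x : ℝ) : deriv (fun x' => Real.sin x' * c) x = Real.cos x * c := by
  simpa using ((Real.hasDerivAt_sin x).mul_const c).deriv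

lemma dphi2 (c y : ℝ) : deriv (fun y' => c * Real.sin y') y = c * Real.cos y := by
  simpa using ((Real.hasDerivAt_sin y).const_mul c).deriv

/-- With `φ(x,y) = sin x · sin y` and `v(x,y) = sin²x·(1 − cos y)`, the elliptic
equation `−(1/2)Δv + (1/(2φ))⟨∇φ, ∇v⟩ = v` holds on `(0,π) × (0,π)`. -/
theorem stmt3 :
    let φ : ℝ → ℝ → ℝ := fun x y => Real.sin x * Real.sin y
    let v : ℝ → ℝ → ℝ := fun x y => Real.sin x ^ 2 * (1 - Real.cos y)
    ∀ x ∈ Ioo 0 π, ∀ y ∈ Ioo 0 π,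
      -(1 / 2) * (deriv (deriv (fun x' => v x' y)) x + deriv (deriv (fun y' => v x y')) y)
        + (1 / (2 * φ x y)) *
          (deriv (fun x' => φ x' y) x * deriv (fun x' => v x' y) x
            + deriv (fun y' => φ x y') y * deriv (fun y' => v x y') y)
      = v x y := by
  intro φ v x hx y hy
  have hsx : Real.sin x ≠ 0 := ne_of_gt (Real.sin_pos_of_pos_of_lt_pi hx.1 hx.2)
  have hsy : Real.sin y ≠ 0 := ne_of_gt (Real.sin_pos_of_pos_of_lt_pi hy.1 hy.2)
  simp only [φ, v, dv1, dv1', dv2, dv2', dphi1, dphi2]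
  have hpy : Real.sin x ^ 2 + Real.cos x ^ 2 = 1 := Real.sin_sq_add_cos_sq x
  field_simp
  nlinarith [sq_nonneg (Real.sin x), sq_nonneg (Real.sin y)]
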